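/- Explicit variance bound and consistency of the Horvitz–Thompson estimator: Given a dependency structure B, suppose in addition that |μ_i(z)| ≤ b for all i and all z ∈ {0,1}^N, and that |B(i)| ≤ c̃ for all i. Then Var(τ̂) ≤ (b²/p + b²/(1−p) + 8 c̃ b²)/N, and consequently, by Chebyshev's inequality, for every ε > 0, P(|τ̂ − τ| ≥ ε) ≤ (b²/p + b²/(1−p) + 8 c̃ b²)/(N ε²). -/

import Mathlib

/-- Expectation with respect to the Bernoulli(p) product measure on `{0,1}^N`. -/
noncomputable def bexp {N : ℕ} (p : ℝ) (f : (Fin N → Bool) → ℝ) : ℝ :=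
  ∑ z : Fin N → Bool, (∏ i, if z i then p else 1 - p) * f z

/-- Variance under the Bernoulli(p) product measure. -/
noncomputable def bvar {N : ℕ} (p : ℝ) (f : (Fin N → Bool) → ℝ) : ℝ :=
  bexp p (fun z => (f z) ^ 2) - (bexp p f) ^ 2

/-- Covariance under the Bernoulli(p) product measure. -/
noncomputable def bcov {N : ℕ} (p : ℝ) (f g : (Fin N → Bool) → ℝ) : ℝ :=
  bexp p (fun z => f z * g z) - bexp p f * bexp p g

/-- A dependency structure. -/
def DepStruct {N : ℕ} (p : ℝ) (μ : Fin N → (Fin N → Bool) → ℝ)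
    (B : Fin N → Finset (Fin N)) : Prop :=
  (∀ i, i ∈ B i) ∧
  ∀ i j : Fin N, j ∉ B i →
    (∀ z : Fin N → Bool, μ i (Function.update z j false) = μ i (Function.update z j true)) ∧
    (∀ z : Fin N → Bool, μ j (Function.update z i false) = μ j (Function.update z i true)) ∧
    (∀ a b : Bool, bcov p (fun z => μ i (Function.update z i a))
        (fun z => μ j (Function.update z j b)) = 0)

/-- Horvitz–Thompson estimator. -/
noncomputable def ht (N : ℕ) (p : ℝ) (μ : Fin N → (Fin N → Bool) → ℝ)
    (z : Fin N → Bool) : ℝ :=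
  (1 / (N * p)) * ∑ i, (if z i then (1 : ℝ) else 0) * μ i z
    - (1 / (N * (1 - p))) * ∑ i, (1 - if z i then (1 : ℝ) else 0) * μ i z

/-- Average marginalized response. -/
noncomputable def amr (N : ℕ) (p : ℝ) (μ : Fin N → (Fin N → Bool) → ℝ) : ℝ :=
  (1 / N) * ∑ i, (bexp p (fun z => μ i (Function.update z i true))
    - bexp p (fun z => μ i (Function.update z i false)))



variable {N : ℕ} {p : ℝ}


lemma bexp_congr {f g : (Fin N → Bool) → ℝ} (h : ∀ z, f z = g z) : bexp p f = bexp p g :=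
  Finset.sum_congr rfl fun z _ => by rw [h]

lemma bexp_add (f g : (Fin N → Bool) → ℝ) :
    bexp p (fun z => f z + g z) = bexp p f + bexp p g := by
  unfold bexp; rw [← Finset.sum_add_distrib]
  exact Finset.sum_congr rfl fun z _ => by ring

lemma bexp_smul (c : ℝ) (f : (Fin N → Bool) → ℝ) :
    bexp p (fun z => c * f z) = c * bexp p f := by
  unfold bexp; rw [Finset.mul_sum]
  exact Finset.sum_congr rfl fun z _ => by ring

lemma bexp_sum {ι : Type*} (s : Finset ι) (f : ι → (Fin N → Bool) → ℝ) :
    bexp p (fun z => ∑ i ∈ s, f i z) = ∑ i ∈ s, bexp p (f i) := by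
  unfold bexp
  simp only [Finset.mul_sum]
  rw [Finset.sum_comm]

lemma sum_w : ∑ z : Fin N → Bool, ∏ i, (if z i then p else 1 - p) = 1 := by
  rw [← Fintype.prod_sum fun (_ : Fin N) (b : Bool) => if b then p else (1:ℝ) - p]
  simp

lemma bexp_const (c : ℝ) : bexp p (fun _ : Fin N → Bool => c) = c := by
  unfold bexp
  rw [← Finset.sum_mul, sum_w, one_mul]

lemma w_nonneg (hp0 : 0 ≤ p) (hp1 : p ≤ 1) (z : Fin N → Bool) :
    0 ≤ ∏ i, if z i then p else 1 - p :=
  Finset.prod_nonneg fun i _ => by split <;> linarith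

lemma bexp_mono (hp0 : 0 ≤ p) (hp1 : p ≤ 1) {f g : (Fin N → Bool) → ℝ}
    (h : ∀ z, f z ≤ g z) : bexp p f ≤ bexp p g :=
  Finset.sum_le_sum fun z _ => mul_le_mul_of_nonneg_left (h z) (w_nonneg hp0 hp1 z)

lemma bexp_abs_le (hp0 : 0 ≤ p) (hp1 : p ≤ 1) (f : (Fin N → Bool) → ℝ) :
    |bexp p f| ≤ bexp p (fun z => |f z|) := by
  unfold bexp
  refine (Finset.abs_sum_le_sum_abs _ _).trans (le_of_eq ?_)
  exact Finset.sum_congr rfl fun z _ => by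
    rw [abs_mul, abs_of_nonneg (w_nonneg hp0 hp1 z)]


lemma splitAt_apply_ne (i : Fin N) (a : Bool) (y : {j : Fin N // j ≠ i} → Bool)
    (j : {j : Fin N // j ≠ i}) : (Equiv.funSplitAt i Bool).symm (a, y) j.1 = y j := by
  simp [Equiv.funSplitAt, Equiv.piSplitAt, j.2]

lemma splitAt_apply_self (i : Fin N) (a : Bool) (y : {j : Fin N // j ≠ i} → Bool) :
    (Equiv.funSplitAt i Bool).symm (a, y) i = a := by
  simp [Equiv.funSplitAt, Equiv.piSplitAt]

lemma update_splitAt (i : Fin N) (a c : Bool) (y : {j : Fin N // j ≠ i} → Bool) :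
    Function.update ((Equiv.funSplitAt i Bool).symm (c, y)) i a
      = (Equiv.funSplitAt i Bool).symm (a, y) := by
  funext j
  rcases eq_or_ne j i with rfl | h
  · simp [Equiv.funSplitAt, Equiv.piSplitAt]
  · simp [Function.update_of_ne h, Equiv.funSplitAt, Equiv.piSplitAt, h]

lemma bexp_split (i : Fin N) (F : (Fin N → Bool) → ℝ) :
    bexp p F = ∑ a : Bool, (if a then p else 1 - p) *
      ∑ y : {j : Fin N // j ≠ i} → Bool, (∏ j, if y j then p else 1 - p) *
        F ((Equiv.funSplitAt i Bool).symm (a, y)) := by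
  rw [bexp, ← Equiv.sum_comp (Equiv.funSplitAt i Bool).symm
      (fun z => (∏ k, if z k then p else 1 - p) * F z), Fintype.sum_prod_type]
  refine Finset.sum_congr rfl fun a _ => ?_
  rw [Finset.mul_sum]
  refine Finset.sum_congr rfl fun y _ => ?_
  rw [← mul_assoc]
  congr 1
  rw [Fintype.prod_eq_mul_prod_compl i, splitAt_apply_self]
  congr 1
  rw [Finset.prod_subtype (p := fun j => j ≠ i) ({i}ᶜ : Finset (Fin N)) (fun j => by simp)
      (fun j => if (Equiv.funSplitAt i Bool).symm (a, y) j then p else 1 - p)]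
  exact Finset.prod_congr rfl fun j _ => by rw [splitAt_apply_ne]

/-- `F` does not depend on coordinate `i`. -/
def Indep (i : Fin N) (F : (Fin N → Bool) → ℝ) : Prop :=
  ∀ z a, F (Function.update z i a) = F z

lemma indep_of_pair {i : Fin N} {F : (Fin N → Bool) → ℝ}
    (h : ∀ z, F (Function.update z i false) = F (Function.update z i true)) :
    Indep i F := by
  intro z a
  have hz : F z = F (Function.update z i (z i)) := by rw [Function.update_eq_self]
  cases a <;> cases hzi : z i <;> rw [hz, hzi] <;>
    first | rfl | exact h z | exact (h z).symm

lemma bexp_update (i : Fin N) (a : Bool) (F : (Fin N → Bool) → ℝ) :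
    bexp p (fun z => F (Function.update z i a)) =
      ∑ y : {j : Fin N // j ≠ i} → Bool, (∏ j, if y j then p else 1 - p) *
        F ((Equiv.funSplitAt i Bool).symm (a, y)) := by
  rw [bexp_split i]
  have : ∀ c : Bool, ∀ y : {j : Fin N // j ≠ i} → Bool,
      F (Function.update ((Equiv.funSplitAt i Bool).symm (c, y)) i a)
      = F ((Equiv.funSplitAt i Bool).symm (a, y)) := fun c y => by rw [update_splitAt]
  rw [Fintype.sum_bool]
  simp only [this]
  simp only [if_true, if_false, Bool.false_eq_true]
  ring

/-- Conditioning on one coordinate. -/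
lemma bexp_decomp (i : Fin N) (F : (Fin N → Bool) → ℝ) :
    bexp p F = p * bexp p (fun z => F (Function.update z i true))
      + (1 - p) * bexp p (fun z => F (Function.update z i false)) := by
  rw [bexp_split i, Fintype.sum_bool, bexp_update, bexp_update]
  simp

/-- Pull out a factor depending only on coordinate `i`. -/
lemma bexp_if_mul (i : Fin N) (s t : ℝ) {F : (Fin N → Bool) → ℝ} (hF : Indep i F) :
    bexp p (fun z => (if z i then s else t) * F z) = (p * s + (1 - p) * t) * bexp p F := by
  rw [bexp_decomp i (fun z => (if z i then s else t) * F z)]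
  have h1 : ∀ z, (if Function.update z i true i then s else t) * F (Function.update z i true)
      = s * F z := fun z => by rw [Function.update_self, hF]; simp
  have h0 : ∀ z, (if Function.update z i false i then s else t) * F (Function.update z i false)
      = t * F z := fun z => by rw [Function.update_self, hF]; simp
  simp only [h1, h0, bexp_smul]
  ring



section Indeps
variable {i j : Fin N} {F G : (Fin N → Bool) → ℝ}

lemma indep_const (c : ℝ) : Indep i (fun _ => c) := fun _ _ => rfl

lemma indep_mul (hF : Indep i F) (hG : Indep i G) : Indep i (fun z => F z * G z) := by
  intro z a
  show F (Function.update z i a) * G (Function.update z i a) = _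
  rw [hF z a, hG z a]

lemma indep_sq (hF : Indep i F) : Indep i (fun z => F z ^ 2) := by
  intro z a
  show F (Function.update z i a) ^ 2 = _
  rw [hF z a]

lemma indep_if (hji : j ≠ i) (s t : ℝ) (hF : Indep i F) :
    Indep i (fun z => (if z j then s else t) * F z) := by
  intro z a
  show (if Function.update z i a j then s else t) * F (Function.update z i a) = _
  rw [Function.update_of_ne hji, hF z a]

lemma indep_g_self (μ : Fin N → (Fin N → Bool) → ℝ) (a : Bool) :
    Indep i (fun z => μ i (Function.update z i a)) := by
  intro z c
  show μ i (Function.update (Function.update z i c) i a) = _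
  rw [Function.update_idem]

lemma indep_g_other (μ : Fin N → (Fin N → Bool) → ℝ) (hji : j ≠ i) (c : Bool)
    (hμ : ∀ z : Fin N → Bool, μ j (Function.update z i false) = μ j (Function.update z i true)) :
    Indep i (fun z => μ j (Function.update z j c)) := by
  have hind : Indep i (μ j) := indep_of_pair hμ
  intro z a
  show μ j (Function.update (Function.update z i a) j c) = _
  rw [Function.update_comm (Ne.symm hji), hind]

end Indeps

noncomputable def hterm {N : ℕ} (p : ℝ) (μ : Fin N → (Fin N → Bool) → ℝ) (i : Fin N)
    (z : Fin N → Bool) : ℝ :=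
  (if z i then 1/p else 0) * μ i (Function.update z i true)
    + (if z i then 0 else -(1/(1-p))) * μ i (Function.update z i false)

section HT
variable (hp0 : 0 < p) (hp1 : p < 1)
  {μ : Fin N → (Fin N → Bool) → ℝ} {b : ℝ} (hb : ∀ i z, |μ i z| ≤ b)

include hp0 hp1 in
lemma hterm_mean (i : Fin N) :
    bexp p (hterm p μ i) = bexp p (fun z => μ i (Function.update z i true))
      - bexp p (fun z => μ i (Function.update z i false)) := by
  have h := bexp_add (p := p)
    (fun z => (if z i then 1/p else 0) * μ i (Function.update z i true))
    (fun z => (if z i then 0 else -(1/(1-p))) * μ i (Function.update z i false))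
  rw [show hterm p μ i = fun z =>
      (if z i then 1/p else 0) * μ i (Function.update z i true)
      + (if z i then 0 else -(1/(1-p))) * μ i (Function.update z i false) from rfl, h,
    bexp_if_mul i _ _ (indep_g_self μ true), bexp_if_mul i _ _ (indep_g_self μ false)]
  have h1 : p * (1/p) + (1-p) * 0 = 1 := by field_simp; ring
  have h2 : p * 0 + (1-p) * (-(1/(1-p))) = -1 := by
    rw [mul_zero, zero_add, mul_neg, mul_one_div, div_self (by linarith)]
  rw [h1, h2]; ring

include hp0 hp1 hb in
lemma hterm_sq (i : Fin N) :
    bexp p (fun z => hterm p μ i z ^ 2) ≤ b^2/p + b^2/(1-p) := by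
  have hq0 : (0:ℝ) < 1 - p := by linarith
  have hpt : ∀ z : Fin N → Bool, hterm p μ i z ^ 2 =
      (if z i then (1/p)*(1/p) else 0) * (μ i (Function.update z i true))^2
      + (if z i then 0 else (1/(1-p))*(1/(1-p))) * (μ i (Function.update z i false))^2 := by
    intro z; cases hzi : z i <;> simp [hterm, hzi] <;> ring
  rw [bexp_congr hpt, bexp_add,
    bexp_if_mul i _ _ (indep_sq (indep_g_self μ true)),
    bexp_if_mul i _ _ (indep_sq (indep_g_self μ false))]
  have hp' : p * (1/p) = 1 := by field_simp
  have hq' : (1-p) * (1/(1-p)) = 1 := by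
    rw [mul_one_div, div_self hq0.ne']
  have e1 : p * ((1/p)*(1/p)) + (1-p) * 0 = 1/p := by
    rw [mul_zero, add_zero, ← mul_assoc, hp', one_mul]
  have e2 : p * 0 + (1-p) * ((1/(1-p))*(1/(1-p))) = 1/(1-p) := by
    rw [mul_zero, zero_add, ← mul_assoc, hq', one_mul]
  rw [e1, e2]
  have hsq : ∀ (a : Bool), bexp p (fun z => (μ i (Function.update z i a))^2) ≤ b^2 := by
    intro a
    calc bexp p (fun z => (μ i (Function.update z i a))^2)
        ≤ bexp p (fun _ => b^2) := by
          refine bexp_mono hp0.le hp1.le fun z => ?_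
          rw [← sq_abs]
          exact pow_le_pow_left₀ (abs_nonneg _) (hb i _) 2
      _ = b^2 := bexp_const _
  have g1 := hsq true; have g0 := hsq false
  have c1 : (0:ℝ) ≤ 1/p := by positivity
  have c0 : (0:ℝ) ≤ 1/(1-p) := by positivity
  calc 1/p * bexp p (fun z => (μ i (Function.update z i true))^2)
        + 1/(1-p) * bexp p (fun z => (μ i (Function.update z i false))^2)
      ≤ 1/p * b^2 + 1/(1-p) * b^2 := by
        gcongr
    _ = b^2/p + b^2/(1-p) := by ring

end HT

section HT2
variable (hp0 : 0 < p) (hp1 : p < 1)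
  {μ : Fin N → (Fin N → Bool) → ℝ} {b : ℝ} (hb : ∀ i z, |μ i z| ≤ b)

include hp0 hp1 hb in
lemma hterm_abs (i : Fin N) (z : Fin N → Bool) :
    |hterm p μ i z| ≤ (if z i then 1/p else 1/(1-p)) * b := by
  have hq0 : (0:ℝ) < 1 - p := by linarith
  cases hzi : z i <;> simp only [hterm, hzi, if_true, if_false, Bool.false_eq_true,
    zero_mul, add_zero, zero_add, one_mul, neg_mul]
  · rw [abs_neg, abs_mul, abs_of_nonneg (by positivity : (0:ℝ) ≤ 1/(1-p))]
    exact mul_le_mul_of_nonneg_left (hb _ _) (by positivity)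
  · rw [abs_mul, abs_of_nonneg (by positivity : (0:ℝ) ≤ 1/p)]
    exact mul_le_mul_of_nonneg_left (hb _ _) (by positivity)

include hp0 hp1 hb in
lemma hterm_mean_abs (i : Fin N) : |bexp p (hterm p μ i)| ≤ 2 * b := by
  have hbnn : 0 ≤ b := le_trans (abs_nonneg _) (hb i (fun _ => true))
  rw [hterm_mean hp0 hp1 i]
  have key : ∀ a : Bool, |bexp p (fun z => μ i (Function.update z i a))| ≤ b := by
    intro a
    refine le_trans (bexp_abs_le hp0.le hp1.le _) ?_
    calc bexp p (fun z => |μ i (Function.update z i a)|)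
        ≤ bexp p (fun _ => b) := bexp_mono hp0.le hp1.le fun z => hb i _
      _ = b := bexp_const _
  have h1 := key true; have h0 := key false
  calc |bexp p (fun z => μ i (Function.update z i true))
        - bexp p (fun z => μ i (Function.update z i false))|
      ≤ |bexp p (fun z => μ i (Function.update z i true))|
        + |bexp p (fun z => μ i (Function.update z i false))| := abs_sub _ _
    _ ≤ 2 * b := by linarith

include hp0 hp1 hb in
lemma hterm_prod_abs {i j : Fin N} (hij : i ≠ j) :
    |bexp p (fun z => hterm p μ i z * hterm p μ j z)| ≤ 4 * b^2 := by
  have hq0 : (0:ℝ) < 1 - p := by linarith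
  have hbnn : 0 ≤ b := le_trans (abs_nonneg _) (hb i (fun _ => true))
  refine le_trans (bexp_abs_le hp0.le hp1.le _) ?_
  have step : bexp p (fun z => |hterm p μ i z * hterm p μ j z|)
      ≤ bexp p (fun z => (if z i then 1/p else 1/(1-p)) *
          ((if z j then 1/p else 1/(1-p)) * b^2)) := by
    refine bexp_mono hp0.le hp1.le fun z => ?_
    rw [abs_mul]
    have h1 := hterm_abs hp0 hp1 hb i z
    have h2 := hterm_abs hp0 hp1 hb j z
    have c1 : (0:ℝ) ≤ (if z i then 1/p else 1/(1-p)) := by split <;> positivity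
    have c2 : (0:ℝ) ≤ (if z j then 1/p else 1/(1-p)) := by split <;> positivity
    calc |hterm p μ i z| * |hterm p μ j z|
        ≤ ((if z i then 1/p else 1/(1-p)) * b) * ((if z j then 1/p else 1/(1-p)) * b) :=
          mul_le_mul h1 h2 (abs_nonneg _) (by positivity)
      _ = (if z i then 1/p else 1/(1-p)) * ((if z j then 1/p else 1/(1-p)) * b^2) := by ring
  refine le_trans step ?_
  have hInd : Indep i (fun z => (if z j then 1/p else 1/(1-p)) * b^2) := by
    have := indep_if (i := i) (j := j) (F := fun _ => b^2) (Ne.symm hij) (1/p) (1/(1-p))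
      (indep_const _)
    exact this
  rw [bexp_if_mul i _ _ hInd,
    bexp_if_mul j _ _ (indep_const (i := j) (b^2)), bexp_const]
  have hc : p * (1/p) + (1-p) * (1/(1-p)) = 2 := by
    rw [mul_one_div, div_self hp0.ne', mul_one_div, div_self hq0.ne']; norm_num
  rw [hc]; nlinarith

end HT2


section HT3
variable (hp0 : 0 < p) (hp1 : p < 1) {μ : Fin N → (Fin N → Bool) → ℝ}

include hp0 hp1 in
lemma hterm_cov_zero {B : Fin N → Finset (Fin N)} (hB : DepStruct p μ B)
    {i j : Fin N} (hj : j ∉ B i) :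
    bcov p (hterm p μ i) (hterm p μ j) = 0 := by
  have hq0 : (0:ℝ) < 1 - p := by linarith
  have hij : i ≠ j := fun h => hj (h ▸ hB.1 i)
  obtain ⟨hmi, hmj, hcov⟩ := hB.2 i j hj
  have hpt : ∀ z, hterm p μ i z * hterm p μ j z =
      (if z i then 1/p else 0) * ((if z j then 1/p else 0) *
        (μ i (Function.update z i true) * μ j (Function.update z j true)))
    + ((if z i then 1/p else 0) * ((if z j then 0 else -(1/(1-p))) *
        (μ i (Function.update z i true) * μ j (Function.update z j false)))
    + ((if z i then 0 else -(1/(1-p))) * ((if z j then 1/p else 0) *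
        (μ i (Function.update z i false) * μ j (Function.update z j true)))
    + (if z i then 0 else -(1/(1-p))) * ((if z j then 0 else -(1/(1-p))) *
        (μ i (Function.update z i false) * μ j (Function.update z j false))))) := by
    intro z; simp only [hterm]; ring
  have I11 : Indep i (fun z => (if z j then 1/p else 0) *
      (μ i (Function.update z i true) * μ j (Function.update z j true))) :=
    indep_if (Ne.symm hij) _ _ (indep_mul (indep_g_self μ true)
      (indep_g_other μ (Ne.symm hij) true hmj))
  have I10 : Indep i (fun z => (if z j then 0 else -(1/(1-p))) *
      (μ i (Function.update z i true) * μ j (Function.update z j false))) :=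
    indep_if (Ne.symm hij) _ _ (indep_mul (indep_g_self μ true)
      (indep_g_other μ (Ne.symm hij) false hmj))
  have I01 : Indep i (fun z => (if z j then 1/p else 0) *
      (μ i (Function.update z i false) * μ j (Function.update z j true))) :=
    indep_if (Ne.symm hij) _ _ (indep_mul (indep_g_self μ false)
      (indep_g_other μ (Ne.symm hij) true hmj))
  have I00 : Indep i (fun z => (if z j then 0 else -(1/(1-p))) *
      (μ i (Function.update z i false) * μ j (Function.update z j false))) :=
    indep_if (Ne.symm hij) _ _ (indep_mul (indep_g_self μ false)
      (indep_g_other μ (Ne.symm hij) false hmj))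
  have J1t : Indep j (fun z => μ i (Function.update z i true) * μ j (Function.update z j true)) :=
    indep_mul (indep_g_other μ hij true hmi) (indep_g_self μ true)
  have J1f : Indep j (fun z => μ i (Function.update z i true) * μ j (Function.update z j false)) :=
    indep_mul (indep_g_other μ hij true hmi) (indep_g_self μ false)
  have J0t : Indep j (fun z => μ i (Function.update z i false) * μ j (Function.update z j true)) :=
    indep_mul (indep_g_other μ hij false hmi) (indep_g_self μ true)
  have J0f : Indep j (fun z => μ i (Function.update z i false) * μ j (Function.update z j false)) :=
    indep_mul (indep_g_other μ hij false hmi) (indep_g_self μ false)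
  have hc1 : p * (1/p) + (1-p) * 0 = 1 := by
    rw [mul_one_div, div_self hp0.ne', mul_zero, add_zero]
  have hc0 : p * 0 + (1-p) * (-(1/(1-p))) = -1 := by
    rw [mul_zero, zero_add, mul_neg, mul_one_div, div_self hq0.ne']
  have h11 := hcov true true
  have h10 := hcov true false
  have h01 := hcov false true
  have h00 := hcov false false
  simp only [bcov] at h11 h10 h01 h00 ⊢
  rw [bexp_congr hpt, bexp_add, bexp_add, bexp_add,
    bexp_if_mul i _ _ I11, bexp_if_mul i _ _ I10, bexp_if_mul i _ _ I01,
    bexp_if_mul i _ _ I00,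
    bexp_if_mul j _ _ J1t, bexp_if_mul j _ _ J1f, bexp_if_mul j _ _ J0t,
    bexp_if_mul j _ _ J0f,
    hterm_mean hp0 hp1 i, hterm_mean hp0 hp1 j, hc1, hc0]
  linear_combination h11 - h10 - h01 + h00

end HT3

section HT4
variable (hp0 : 0 < p) (hp1 : p < 1)
  {μ : Fin N → (Fin N → Bool) → ℝ} {b : ℝ} (hb : ∀ i z, |μ i z| ≤ b)

include hp0 hp1 hb in
lemma hterm_cov_bound {i j : Fin N} (hij : i ≠ j) :
    |bcov p (hterm p μ i) (hterm p μ j)| ≤ 8 * b^2 := by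
  have h1 := hterm_prod_abs hp0 hp1 hb hij
  have h2 := hterm_mean_abs hp0 hp1 hb i
  have h3 := hterm_mean_abs hp0 hp1 hb j
  have hbnn : 0 ≤ b := le_trans (abs_nonneg _) (hb i (fun _ => true))
  rw [bcov]
  refine le_trans (abs_sub _ _) ?_
  rw [abs_mul]
  nlinarith [abs_nonneg (bexp p (hterm p μ i)), abs_nonneg (bexp p (hterm p μ j))]

include hp0 hp1 hb in
lemma hterm_cov_diag (i : Fin N) :
    bcov p (hterm p μ i) (hterm p μ i) ≤ b^2/p + b^2/(1-p) := by
  have h := hterm_sq hp0 hp1 hb i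
  rw [bcov]
  have : bexp p (fun z => hterm p μ i z * hterm p μ i z)
      = bexp p (fun z => hterm p μ i z ^ 2) := bexp_congr fun z => (sq (hterm p μ i z)).symm
  rw [this]
  nlinarith [sq_nonneg (bexp p (hterm p μ i))]

end HT4

lemma bvar_smul_sum (c : ℝ) (f : Fin N → (Fin N → Bool) → ℝ) :
    bvar p (fun z => c * ∑ i, f i z) = c^2 * ∑ i, ∑ j, bcov p (f i) (f j) := by
  unfold bvar
  have h1 : ∀ z : Fin N → Bool, (c * ∑ i, f i z)^2
      = c^2 * ∑ i : Fin N, ∑ j : Fin N, f i z * f j z := by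
    intro z
    rw [← Finset.sum_mul_sum]
    ring
  rw [bexp_congr h1, bexp_smul, bexp_smul, bexp_sum]
  have h2 : ∀ i : Fin N, bexp p (fun z => ∑ j : Fin N, f i z * f j z)
      = ∑ j : Fin N, bexp p (fun z => f i z * f j z) := fun i => bexp_sum _ _
  rw [Finset.sum_congr rfl fun i _ => h2 i, bexp_sum]
  have h3 : (∑ i : Fin N, bexp p (f i)) * (∑ j : Fin N, bexp p (f j))
      = ∑ i : Fin N, ∑ j : Fin N, bexp p (f i) * bexp p (f j) := Finset.sum_mul_sum _ _ _ _
  have h4 : ∑ i : Fin N, ∑ j : Fin N, bcov p (f i) (f j)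
      = (∑ i : Fin N, ∑ j : Fin N, bexp p (fun z => f i z * f j z))
        - ∑ i : Fin N, ∑ j : Fin N, bexp p (f i) * bexp p (f j) := by
    rw [← Finset.sum_sub_distrib]
    exact Finset.sum_congr rfl fun i _ => by rw [← Finset.sum_sub_distrib]; rfl
  rw [h4]
  have h5 : (c * ∑ i : Fin N, bexp p (f i)) ^ 2
      = c^2 * ((∑ i : Fin N, bexp p (f i)) * ∑ j : Fin N, bexp p (f j)) := by ring
  rw [h5, h3]
  ring



lemma ht_eq (N : ℕ) (p : ℝ) (μ : Fin N → (Fin N → Bool) → ℝ) :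
    ht N p μ = fun z => (1/(N:ℝ)) * ∑ i, hterm p μ i z := by
  funext z
  have hpt : ∀ i : Fin N, hterm p μ i z
      = (1/p) * ((if z i then (1:ℝ) else 0) * μ i z)
        - (1/(1-p)) * ((1 - if z i then (1:ℝ) else 0) * μ i z) := by
    intro i
    unfold hterm
    cases hzi : z i
    · rw [show Function.update z i false = z from by rw [← hzi, Function.update_eq_self]]
      simp only [hzi, Bool.false_eq_true, if_false]
      ring
    · rw [show Function.update z i true = z from by rw [← hzi, Function.update_eq_self]]
      simp only [hzi, if_true]
      ring
  rw [Finset.sum_congr rfl (fun i _ => hpt i), Finset.sum_sub_distrib,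
    ← Finset.mul_sum, ← Finset.mul_sum]
  unfold ht
  rw [show (1:ℝ)/((N:ℝ)*p) = (1/(N:ℝ))*(1/p) by rw [one_div, mul_inv, one_div, one_div],
    show (1:ℝ)/((N:ℝ)*(1-p)) = (1/(N:ℝ))*(1/(1-p)) by rw [one_div, mul_inv, one_div, one_div]]
  ring

lemma ht_mean (hp0 : 0 < p) (hp1 : p < 1) (μ : Fin N → (Fin N → Bool) → ℝ) :
    bexp p (ht N p μ) = amr N p μ := by
  rw [ht_eq, bexp_smul, bexp_sum, amr]
  rw [Finset.sum_congr rfl (fun i _ => hterm_mean hp0 hp1 i)]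

lemma bvar_centered (f : (Fin N → Bool) → ℝ) :
    bexp p (fun z => (f z - bexp p f)^2) = bvar p f := by
  have h : ∀ z, (f z - bexp p f)^2
      = f z ^ 2 + ((-(2 * bexp p f)) * f z + (bexp p f)^2) := fun z => by ring
  rw [bexp_congr h, bexp_add, bexp_add, bexp_smul,
    bexp_const ((bexp p f)^2)]
  unfold bvar
  ring

theorem ht_aux_main
    (N : ℕ) (hN : 1 ≤ N) (p : ℝ) (hp0 : 0 < p) (hp1 : p < 1)
    (μ : Fin N → (Fin N → Bool) → ℝ) (B : Fin N → Finset (Fin N))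
    (hB : DepStruct p μ B)
    (b : ℝ) (hb : ∀ i z, |μ i z| ≤ b)
    (ctil : ℕ) (hc : ∀ i, (B i).card ≤ ctil) :
    bvar p (ht N p μ)
        ≤ (b ^ 2 / p + b ^ 2 / (1 - p) + 8 * ctil * b ^ 2) / N
    ∧ ∀ ε : ℝ, 0 < ε →
        bexp p (fun z => if ε ≤ |ht N p μ z - amr N p μ| then (1 : ℝ) else 0)
          ≤ (b ^ 2 / p + b ^ 2 / (1 - p) + 8 * ctil * b ^ 2) / (N * ε ^ 2) := by
  have hq0 : (0:ℝ) < 1 - p := by linarith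
  have hNpos : (0:ℝ) < (N:ℝ) := by exact_mod_cast hN
  set C : ℝ := b ^ 2 / p + b ^ 2 / (1 - p) + 8 * ctil * b ^ 2 with hC
  have hb2 : (0:ℝ) ≤ 8 * b^2 := by positivity
  have hrow : ∀ i : Fin N, ∑ j : Fin N, bcov p (hterm p μ i) (hterm p μ j) ≤ C := by
    intro i
    have hzero : ∑ j : Fin N, bcov p (hterm p μ i) (hterm p μ j)
        = ∑ j ∈ B i, bcov p (hterm p μ i) (hterm p μ j) :=
      (Finset.sum_subset (Finset.subset_univ (B i))
        (fun j _ hj => hterm_cov_zero hp0 hp1 hB hj)).symm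
    rw [hzero, ← Finset.add_sum_erase (B i) _ (hB.1 i)]
    have h2 : ∑ j ∈ (B i).erase i, bcov p (hterm p μ i) (hterm p μ j)
        ≤ ((B i).erase i).card • (8*b^2) :=
      Finset.sum_le_card_nsmul _ _ _ (fun j hjm =>
        le_trans (le_abs_self _)
          (hterm_cov_bound hp0 hp1 hb (Ne.symm (Finset.mem_erase.mp hjm).1)))
    have hcard : (((B i).erase i).card : ℝ) ≤ (ctil : ℝ) := by
      exact_mod_cast le_trans (Finset.card_erase_le) (hc i)
    have h2' : ∑ j ∈ (B i).erase i, bcov p (hterm p μ i) (hterm p μ j)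
        ≤ (ctil : ℝ) * (8*b^2) := by
      refine le_trans h2 ?_
      rw [nsmul_eq_mul]
      exact mul_le_mul_of_nonneg_right hcard hb2
    have h1 := hterm_cov_diag hp0 hp1 hb i
    rw [hC]
    calc bcov p (hterm p μ i) (hterm p μ i)
          + ∑ j ∈ (B i).erase i, bcov p (hterm p μ i) (hterm p μ j)
        ≤ (b^2/p + b^2/(1-p)) + (ctil : ℝ) * (8*b^2) := add_le_add h1 h2'
      _ = b ^ 2 / p + b ^ 2 / (1 - p) + 8 * ctil * b ^ 2 := by ring
  have htotal : ∑ i : Fin N, ∑ j : Fin N, bcov p (hterm p μ i) (hterm p μ j)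
      ≤ (N : ℝ) * C := by
    have := Finset.sum_le_card_nsmul Finset.univ
      (fun i => ∑ j : Fin N, bcov p (hterm p μ i) (hterm p μ j)) C
      (fun i _ => hrow i)
    rw [Finset.card_univ, Fintype.card_fin, nsmul_eq_mul] at this
    exact this
  have hvar : bvar p (ht N p μ) ≤ C / N := by
    rw [ht_eq, bvar_smul_sum]
    calc (1/(N:ℝ))^2 * ∑ i : Fin N, ∑ j : Fin N, bcov p (hterm p μ i) (hterm p μ j)
        ≤ (1/(N:ℝ))^2 * ((N:ℝ) * C) := by
          exact mul_le_mul_of_nonneg_left htotal (by positivity)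
      _ = C / N := by field_simp
  refine ⟨hvar, fun ε hε => ?_⟩
  have hmean : bexp p (ht N p μ) = amr N p μ := ht_mean hp0 hp1 μ
  have hcent : bexp p (fun z => (ht N p μ z - amr N p μ)^2) = bvar p (ht N p μ) := by
    rw [← hmean]
    exact bvar_centered _
  have hpt : ∀ z, (if ε ≤ |ht N p μ z - amr N p μ| then (1:ℝ) else 0)
      ≤ (1/ε^2) * (ht N p μ z - amr N p μ)^2 := by
    intro z
    split
    · rename_i h
      have h1 : ε^2 ≤ (ht N p μ z - amr N p μ)^2 := by
        rw [← sq_abs (ht N p μ z - amr N p μ)]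
        exact pow_le_pow_left₀ hε.le h 2
      rw [one_div, ← div_eq_inv_mul, le_div_iff₀ (by positivity)]
      linarith
    · positivity
  calc bexp p (fun z => if ε ≤ |ht N p μ z - amr N p μ| then (1:ℝ) else 0)
      ≤ bexp p (fun z => (1/ε^2) * (ht N p μ z - amr N p μ)^2) :=
        bexp_mono hp0.le hp1.le hpt
    _ = (1/ε^2) * bvar p (ht N p μ) := by rw [bexp_smul, hcent]
    _ ≤ (1/ε^2) * (C/N) := mul_le_mul_of_nonneg_left hvar (by positivity)
    _ = C / (N * ε^2) := by rw [← div_div]; ring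

/-- Explicit variance bound and consistency of the Horvitz–Thompson estimator:
given a dependency structure with `|μ_i| ≤ b` and `|B(i)| ≤ c̃`,
`Var(τ̂) ≤ (b²/p + b²/(1−p) + 8 c̃ b²)/N`, and by Chebyshev's inequality,
`P(|τ̂ − τ| ≥ ε) ≤ (b²/p + b²/(1−p) + 8 c̃ b²)/(N ε²)` for every `ε > 0`. -/
theorem ht_variance_bound_explicit_and_consistency
    (N : ℕ) (hN : 1 ≤ N) (p : ℝ) (hp0 : 0 < p) (hp1 : p < 1)
    (μ : Fin N → (Fin N → Bool) → ℝ) (B : Fin N → Finset (Fin N))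
    (hB : DepStruct p μ B)
    (b : ℝ) (hb : ∀ i z, |μ i z| ≤ b)
    (ctil : ℕ) (hc : ∀ i, (B i).card ≤ ctil) :
    bvar p (ht N p μ)
        ≤ (b ^ 2 / p + b ^ 2 / (1 - p) + 8 * ctil * b ^ 2) / N
    ∧ ∀ ε : ℝ, 0 < ε →
        bexp p (fun z => if ε ≤ |ht N p μ z - amr N p μ| then (1 : ℝ) else 0)
          ≤ (b ^ 2 / p + b ^ 2 / (1 - p) + 8 * ctil * b ^ 2) / (N * ε ^ 2) := by
  exact ht_aux_main N hN p hp0 hp1 μ B hB b hb ctil hc
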